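/- arXiv:1310.2564 — 2 statements merged into one kernel-verified Lean document; each statement's English description precedes it below -/
import Mathlib

section
/- (Expected inverse of a binomial–Poisson mixture along an immigration–death trajectory) Let λ > 0 and k ∈ ℕ. Then ∫_0^∞ e^{−t} · [ ∑_{l=0}^{k} ∑_{m=0}^{∞} (l + m + 1)^{−1} · C(k,l) e^{−lt} (1 − e^{−t})^{k−l} · e^{−λ(1−e^{−t})} (λ(1−e^{−t}))^m / m! ] dt ≤ (1/λ + 1/(k+1)) · (1 − e^{−λ}). Equivalently, if for each t ≥ 0 the random variable Z_t = X_t + Y_t is the sum of independent X_t ∼ Binomial(k, e^{−t}) and Y_t ∼ Poisson(λ(1 − e^{−t})), then ∫_0^∞ e^{−t} E[(Z_t + 1)^{−1}] dt ≤ (1/λ + 1/(k+1))(1 − e^{−λ}). -/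
open MeasureTheory Real Finset Set Filter


lemma exp_tsum' (x : ℝ) : ∑' m : ℕ, x ^ m / (m.factorial : ℝ) = Real.exp x := by
  rw [Real.exp_eq_exp_ℝ, NormedSpace.exp_eq_tsum (𝕂 := ℝ)]
  simp [div_eq_inv_mul, smul_eq_mul]

lemma summable_aux (x : ℝ) (hx : 0 ≤ x) :
    Summable (fun m : ℕ => x ^ m / ((m + 1) * (m.factorial : ℝ))) := by
  apply Summable.of_nonneg_of_le (fun m => by positivity) _ (Real.summable_pow_div_factorial x)
  intro m
  apply div_le_div_of_nonneg_left (by positivity) (by positivity)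
  have h1 : (0:ℝ) < (m.factorial : ℝ) := by exact_mod_cast m.factorial_pos
  nlinarith [(Nat.cast_nonneg m : (0:ℝ) ≤ m)]

lemma tsum_shift' (x : ℝ) (hx : 0 < x) :
    ∑' m : ℕ, x ^ m / ((m + 1) * (m.factorial : ℝ)) = (Real.exp x - 1) / x := by
  have hs := summable_aux x hx.le
  have key : x * ∑' m : ℕ, x ^ m / ((m + 1) * (m.factorial : ℝ)) = Real.exp x - 1 := by
    rw [← tsum_mul_left]
    have h2 : ∀ m : ℕ, x * (x ^ m / ((m + 1) * (m.factorial : ℝ)))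
        = x ^ (m+1) / ((m+1).factorial : ℝ) := by
      intro m
      rw [Nat.factorial_succ]
      push_cast
      field_simp
      ring
    rw [tsum_congr h2]
    have := Summable.tsum_eq_zero_add (Real.summable_pow_div_factorial x)
    rw [exp_tsum'] at this
    simp at this
    linarith
  field_simp at key ⊢
  linarith [key]


lemma coeff_bound (a b c : ℝ) (ha : 0 ≤ a) (hab : a ≤ b) (hb : 1 ≤ b) (hc : 0 ≤ c) :
    (a + c + 1)⁻¹ ≤ (b - a)/b * (c+1)⁻¹ + a/b * ((b+2)⁻¹ + ((b+1)*(b+2))⁻¹ * (c+1)⁻¹) := by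
  have hb0 : 0 < b := by linarith
  have h1 : (0:ℝ) < a + c + 1 := by linarith
  have h2 : (0:ℝ) < c + 1 := by linarith
  have h3 : (0:ℝ) < b + c + 1 := by linarith
  have step1 : (a + c + 1)⁻¹ ≤ (b - a)/b * (c+1)⁻¹ + a/b * (b+c+1)⁻¹ := by
    rw [show (b - a)/b * (c+1)⁻¹ + a/b * (b+c+1)⁻¹
        = ((b-a)*(b+c+1) + a*(c+1))/(b*((c+1)*(b+c+1))) by field_simp,
      inv_eq_one_div, div_le_div_iff₀ h1 (by positivity)]
    nlinarith [mul_nonneg (mul_nonneg ha hb0.le) (sub_nonneg.2 hab)]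
  have step2 : (b+c+1)⁻¹ ≤ (b+2)⁻¹ + ((b+1)*(b+2))⁻¹ * (c+1)⁻¹ := by
    rw [show (b+2)⁻¹ + ((b+1)*(b+2))⁻¹ * (c+1)⁻¹
        = ((b+1)*(c+1) + 1)/((b+1)*(b+2)*(c+1)) by field_simp,
      inv_eq_one_div, div_le_div_iff₀ h3 (by positivity)]
    nlinarith [mul_nonneg (add_nonneg hb0.le (by norm_num : (0:ℝ) ≤ 1)) (mul_nonneg hc hc)]
  calc (a + c + 1)⁻¹ ≤ (b - a)/b * (c+1)⁻¹ + a/b * (b+c+1)⁻¹ := step1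
    _ ≤ _ := by gcongr

lemma tsum_affine (A B μ : ℝ) (hμ : 0 < μ) (hA : 0 ≤ A) (hB : 0 ≤ B) :
    ∑' m : ℕ, (A + B * ((m:ℝ)+1)⁻¹) * (Real.exp (-μ) * μ ^ m / (m.factorial : ℝ))
      = A + B * ((1 - Real.exp (-μ)) / μ) := by
  have hsum1 : Summable (fun m : ℕ => A * (Real.exp (-μ) * μ ^ m / (m.factorial : ℝ))) := by
    apply Summable.mul_left
    simpa [mul_div_assoc] using (Real.summable_pow_div_factorial μ).mul_left (Real.exp (-μ))
  have hsum2 : Summable (fun m : ℕ =>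
      B * ((m:ℝ)+1)⁻¹ * (Real.exp (-μ) * μ ^ m / (m.factorial : ℝ))) := by
    have h := ((summable_aux μ hμ.le).mul_left (B * Real.exp (-μ)))
    apply h.congr
    intro m
    field_simp
  have key : (fun m : ℕ => (A + B * ((m:ℝ)+1)⁻¹) * (Real.exp (-μ) * μ ^ m / (m.factorial : ℝ)))
      = fun m : ℕ => A * (Real.exp (-μ) * μ ^ m / (m.factorial : ℝ))
        + B * ((m:ℝ)+1)⁻¹ * (Real.exp (-μ) * μ ^ m / (m.factorial : ℝ)) := by
    funext m; ring
  rw [key, Summable.tsum_add hsum1 hsum2]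
  have e1 : ∑' m : ℕ, A * (Real.exp (-μ) * μ ^ m / (m.factorial : ℝ)) = A := by
    rw [tsum_mul_left]
    have : ∑' m : ℕ, Real.exp (-μ) * μ ^ m / (m.factorial : ℝ) = 1 := by
      rw [tsum_congr (fun m => by rw [mul_div_assoc]), tsum_mul_left, exp_tsum',
        ← Real.exp_add]
      simp
    rw [this, mul_one]
  have e2 : ∑' m : ℕ, B * ((m:ℝ)+1)⁻¹ * (Real.exp (-μ) * μ ^ m / (m.factorial : ℝ))
      = B * ((1 - Real.exp (-μ)) / μ) := by
    have : ∀ m : ℕ, B * ((m:ℝ)+1)⁻¹ * (Real.exp (-μ) * μ ^ m / (m.factorial : ℝ))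
        = (B * Real.exp (-μ)) * (μ ^ m / (((m:ℝ) + 1) * (m.factorial : ℝ))) := by
      intro m; field_simp
    rw [tsum_congr this, tsum_mul_left, tsum_shift' μ hμ]
    rw [show (1 - Real.exp (-μ)) / μ = Real.exp (-μ) * ((Real.exp μ - 1)/μ) by
      rw [Real.exp_neg]; field_simp]
    ring
  rw [e1, e2]


lemma summable_affine (A B μ : ℝ) (hμ : 0 ≤ μ) :
    Summable (fun m : ℕ => (A + B * ((m:ℝ)+1)⁻¹) * (Real.exp (-μ) * μ ^ m / (m.factorial : ℝ))) := by
  have h1 : Summable (fun m : ℕ => A * (Real.exp (-μ) * μ ^ m / (m.factorial : ℝ))) := by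
    apply Summable.mul_left
    simpa [mul_div_assoc] using (Real.summable_pow_div_factorial μ).mul_left (Real.exp (-μ))
  have h2 : Summable (fun m : ℕ =>
      B * ((m:ℝ)+1)⁻¹ * (Real.exp (-μ) * μ ^ m / (m.factorial : ℝ))) := by
    have hs : Summable (fun m : ℕ => μ ^ m / ((m + 1) * (m.factorial : ℝ))) := by
      apply Summable.of_nonneg_of_le (fun m => by positivity) _ (Real.summable_pow_div_factorial μ)
      intro m
      apply div_le_div_of_nonneg_left (by positivity) (by positivity)
      have h1 : (0:ℝ) < (m.factorial : ℝ) := by exact_mod_cast m.factorial_pos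
      nlinarith [(Nat.cast_nonneg m : (0:ℝ) ≤ m)]
    apply (hs.mul_left (B * Real.exp (-μ))).congr
    intro m; field_simp
  apply (h1.add h2).congr
  intro m; ring

lemma Tj_le (k j : ℕ) (hj : j ≤ k) (hk : 1 ≤ k) (μ : ℝ) (hμ : 0 < μ) :
    ∑' m : ℕ, ((j:ℝ) + m + 1)⁻¹ * (Real.exp (-μ) * μ ^ m / (m.factorial : ℝ))
      ≤ (j:ℝ)/k * ((k:ℝ)+2)⁻¹
        + (((k:ℝ)-j)/k + (j:ℝ)/k * (((k:ℝ)+1)*((k:ℝ)+2))⁻¹) * ((1 - Real.exp (-μ)) / μ) := by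
  set A : ℝ := (j:ℝ)/k * ((k:ℝ)+2)⁻¹ with hA
  set B : ℝ := ((k:ℝ)-j)/k + (j:ℝ)/k * (((k:ℝ)+1)*((k:ℝ)+2))⁻¹ with hB
  have hkpos : (0:ℝ) < k := by exact_mod_cast hk
  have hjk : (j:ℝ) ≤ k := by exact_mod_cast hj
  have hA0 : 0 ≤ A := by positivity
  have hB0 : 0 ≤ B := by
    apply add_nonneg
    · apply div_nonneg (by linarith) hkpos.le
    · positivity
  rw [← tsum_affine A B μ hμ hA0 hB0]
  apply Summable.tsum_le_tsum _ _ (summable_affine A B μ hμ.le)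
  · intro m
    have hπ : 0 ≤ Real.exp (-μ) * μ ^ m / (m.factorial : ℝ) := by positivity
    apply mul_le_mul_of_nonneg_right _ hπ
    have := coeff_bound (j:ℝ) (k:ℝ) (m:ℝ) (Nat.cast_nonneg j) hjk
      (by exact_mod_cast hk) (Nat.cast_nonneg m)
    calc ((j:ℝ) + m + 1)⁻¹ ≤ _ := this
      _ = A + B * ((m:ℝ)+1)⁻¹ := by rw [hA, hB]; ring
  · apply Summable.of_nonneg_of_le (fun m => by positivity) _
      ((Real.summable_pow_div_factorial μ).mul_left (Real.exp (-μ)))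
    intro m
    rw [mul_div_assoc]
    apply mul_le_of_le_one_left (by positivity)
    rw [inv_le_one_iff₀]
    right
    have : (0:ℝ) ≤ (j:ℝ) := Nat.cast_nonneg j
    have : (0:ℝ) ≤ (m:ℝ) := Nat.cast_nonneg m
    linarith


lemma sum_w (k : ℕ) (p : ℝ) :
    ∑ j ∈ range (k+1), (k.choose j : ℝ) * p^j * (1-p)^(k-j) = 1 := by
  have h := add_pow p (1-p) k
  rw [show (p + (1-p) : ℝ) = 1 by ring, one_pow] at h
  calc ∑ j ∈ range (k+1), (k.choose j : ℝ) * p^j * (1-p)^(k-j)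
      = ∑ j ∈ range (k+1), p ^ j * (1 - p) ^ (k - j) * (k.choose j : ℝ) :=
        Finset.sum_congr rfl (fun j _ => by ring)
    _ = 1 := h.symm

lemma sum_jw (k : ℕ) (hk : 1 ≤ k) (p : ℝ) :
    ∑ j ∈ range (k+1), (j:ℝ) * ((k.choose j : ℝ) * p^j * (1-p)^(k-j)) = k * p := by
  rw [Finset.sum_range_succ']
  simp only [Nat.cast_zero, zero_mul, add_zero]
  have hid : ∀ i : ℕ, ((i:ℝ)+1) * (k.choose (i+1) : ℝ) = (k:ℝ) * ((k-1).choose i : ℝ) := by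
    intro i
    have h0 := Nat.add_one_mul_choose_eq (k-1) i
    have hks : (k-1) + 1 = k := by omega
    rw [hks] at h0
    have : (k * (k-1).choose i : ℕ) = (k.choose (i+1) * (i+1) : ℕ) := h0
    have := congrArg (Nat.cast (R := ℝ)) this
    push_cast at this
    linarith
  have step : ∀ i ∈ range k, ((i:ℝ)+1) * ((k.choose (i+1) : ℝ) * p^(i+1) * (1-p)^(k-(i+1)))
      = (k:ℝ) * p * (((k-1).choose i : ℝ) * p^i * (1-p)^((k-1)-i)) := by
    intro i hi
    have h1 : k - (i+1) = (k-1) - i := by omega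
    rw [h1, show ((i:ℝ)+1) * ((k.choose (i+1) : ℝ) * p^(i+1) * (1-p)^((k-1)-i))
      = (((i:ℝ)+1) * (k.choose (i+1) : ℝ)) * p^(i+1) * (1-p)^((k-1)-i) by ring, hid i]
    rw [pow_succ]
    ring
  push_cast
  calc ∑ i ∈ range k, ((i:ℝ)+1) * ((k.choose (i+1) : ℝ) * p^(i+1) * (1-p)^(k-(i+1)))
      = ∑ i ∈ range k, (k:ℝ) * p * (((k-1).choose i : ℝ) * p^i * (1-p)^((k-1)-i)) :=
        Finset.sum_congr rfl step
    _ = (k:ℝ) * p * ∑ i ∈ range ((k-1)+1), (((k-1).choose i : ℝ) * p^i * (1-p)^((k-1)-i)) := by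
        rw [← Finset.mul_sum, Nat.sub_add_cancel hk]
    _ = (k:ℝ) * p := by rw [sum_w]; ring


lemma inner_bound (k : ℕ) (p μ : ℝ) (hp : 0 < p) (hp1 : p < 1) (hμ : 0 < μ) :
    ∑ j ∈ range (k+1), (∑' m : ℕ, ((j:ℝ) + m + 1)⁻¹ * (k.choose j : ℝ) * p ^ j *
        (1-p) ^ (k-j) * (Real.exp (-μ) * μ ^ m / (m.factorial : ℝ)))
      ≤ (1-p) * ((1 - Real.exp (-μ)) / μ) + p * ((k:ℝ)+2)⁻¹
        + p * (((k:ℝ)+1)*((k:ℝ)+2))⁻¹ * ((1 - Real.exp (-μ)) / μ) := by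
  set h : ℝ := (1 - Real.exp (-μ)) / μ with hh
  have hhle1 : h ≤ 1 := by
    rw [hh, div_le_one hμ]
    have := Real.add_one_le_exp (-μ)
    have e := Real.exp_pos (-μ)
    rw [Real.exp_neg] at *
    nlinarith [Real.exp_pos μ]
  have hh0 : 0 ≤ h := by
    rw [hh]
    apply div_nonneg _ hμ.le
    have : Real.exp (-μ) ≤ 1 := by
      rw [Real.exp_le_one_iff]; linarith
    linarith
  -- rewrite each inner tsum as w_j * T_j
  have hre : ∀ j ∈ range (k+1),
      (∑' m : ℕ, ((j:ℝ) + m + 1)⁻¹ * (k.choose j : ℝ) * p ^ j *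
        (1-p) ^ (k-j) * (Real.exp (-μ) * μ ^ m / (m.factorial : ℝ)))
      = ((k.choose j : ℝ) * p ^ j * (1-p) ^ (k-j)) *
        ∑' m : ℕ, ((j:ℝ) + m + 1)⁻¹ * (Real.exp (-μ) * μ ^ m / (m.factorial : ℝ)) := by
    intro j _
    rw [← tsum_mul_left]
    apply tsum_congr
    intro m; ring
  rw [Finset.sum_congr rfl hre]
  rcases Nat.eq_zero_or_pos k with hk0 | hk
  · subst hk0
    have e0 : ∑' m : ℕ, (((0:ℕ):ℝ) + (m:ℝ) + 1)⁻¹ * (Real.exp (-μ) * μ ^ m / (m.factorial : ℝ))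
        = h := by
      calc ∑' m : ℕ, (((0:ℕ):ℝ) + (m:ℝ) + 1)⁻¹ * (Real.exp (-μ) * μ ^ m / (m.factorial : ℝ))
          = ∑' m : ℕ, ((0:ℝ) + 1 * ((m:ℝ)+1)⁻¹) * (Real.exp (-μ) * μ ^ m / (m.factorial : ℝ)) := by
            apply tsum_congr; intro m; push_cast; ring
        _ = 0 + 1 * ((1 - Real.exp (-μ)) / μ) := tsum_affine 0 1 μ hμ le_rfl zero_le_one
        _ = h := by rw [hh]; ring
    rw [Finset.sum_range_one, e0]
    norm_num
    nlinarith [mul_nonneg hp.le (sub_nonneg.2 hhle1)]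
  · -- k ≥ 1
    have hkR : (1:ℝ) ≤ k := by exact_mod_cast hk
    have hkne : (k:ℝ) ≠ 0 := by exact_mod_cast Nat.pos_iff_ne_zero.mp hk
    have hw : ∀ j ∈ range (k+1), 0 ≤ (k.choose j : ℝ) * p ^ j * (1-p) ^ (k-j) := by
      intro j _
      exact mul_nonneg (mul_nonneg (Nat.cast_nonneg _) (pow_nonneg hp.le _))
        (pow_nonneg (by linarith) _)
    calc ∑ j ∈ range (k+1), ((k.choose j : ℝ) * p ^ j * (1-p) ^ (k-j)) *
          (∑' m : ℕ, ((j:ℝ) + m + 1)⁻¹ * (Real.exp (-μ) * μ ^ m / (m.factorial : ℝ)))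
        ≤ ∑ j ∈ range (k+1), ((k.choose j : ℝ) * p ^ j * (1-p) ^ (k-j)) *
          ((j:ℝ)/k * ((k:ℝ)+2)⁻¹
            + (((k:ℝ)-j)/k + (j:ℝ)/k * (((k:ℝ)+1)*((k:ℝ)+2))⁻¹) * h) := by
          apply Finset.sum_le_sum
          intro j hj
          apply mul_le_mul_of_nonneg_left _ (hw j hj)
          exact Tj_le k j (by simpa [Nat.lt_succ_iff] using hj) hk μ hμ
      _ = ∑ j ∈ range (k+1), ((j:ℝ) * ((k.choose j : ℝ) * p ^ j * (1-p) ^ (k-j))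
            * (((k:ℝ)+2)⁻¹/k + (((k:ℝ)+1)*((k:ℝ)+2))⁻¹ * h/k - h/k)
          + ((k.choose j : ℝ) * p ^ j * (1-p) ^ (k-j)) * h) := by
          apply Finset.sum_congr rfl
          intro j _
          field_simp
          ring
      _ = ((k:ℝ)*p) * (((k:ℝ)+2)⁻¹/k + (((k:ℝ)+1)*((k:ℝ)+2))⁻¹ * h/k - h/k) + 1 * h := by
          rw [Finset.sum_add_distrib, ← Finset.sum_mul, ← Finset.sum_mul, sum_jw k hk p, sum_w]
      _ = (1-p) * h + p * ((k:ℝ)+2)⁻¹ + p * (((k:ℝ)+1)*((k:ℝ)+2))⁻¹ * h := by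
          field_simp
          ring


lemma deriv_pack (l : ℝ) (hl : 0 < l) :
    (∀ t ∈ Ioi (0:ℝ), HasDerivAt (fun t : ℝ => (-Real.exp (-t) + Real.exp (-(l * (1 - Real.exp (-t)))) / l) / l)
      (Real.exp (-t) * ((1 - Real.exp (-(l * (1 - Real.exp (-t))))) / l)) t) := by
  intro t _
  have h1 : HasDerivAt (fun t : ℝ => -t) (-1) t := (hasDerivAt_id t).neg
  have he : HasDerivAt (fun t : ℝ => Real.exp (-t)) (Real.exp (-t) * (-1)) t := h1.exp
  have hinner : HasDerivAt (fun t : ℝ => -(l * (1 - Real.exp (-t))))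
      (-(l * (Real.exp (-t)))) t := by
    have := ((he.const_sub 1).const_mul l).neg
    refine this.congr_deriv ?_
    ring
  have hexp2 : HasDerivAt (fun t : ℝ => Real.exp (-(l * (1 - Real.exp (-t)))))
      (Real.exp (-(l * (1 - Real.exp (-t)))) * (-(l * Real.exp (-t)))) t := hinner.exp
  have := ((he.neg).add (hexp2.div_const l)).div_const l
  refine this.congr_deriv ?_
  field_simp
  ring

lemma int_G1 (l : ℝ) (hl : 0 < l) :
    (∫ t in Ioi (0:ℝ), Real.exp (-t) * ((1 - Real.exp (-(l * (1 - Real.exp (-t))))) / l))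
        = Real.exp (-l)/l^2 + 1/l - 1/l^2
    ∧ IntegrableOn (fun t : ℝ => Real.exp (-t) * ((1 - Real.exp (-(l * (1 - Real.exp (-t))))) / l))
        (Ioi (0:ℝ)) volume := by
  have hcont : ContinuousWithinAt
      (fun t : ℝ => (-Real.exp (-t) + Real.exp (-(l * (1 - Real.exp (-t)))) / l) / l)
      (Ici (0:ℝ)) 0 := by
    apply Continuous.continuousWithinAt
    fun_prop
  have hderiv := deriv_pack l hl
  have hpos : ∀ t ∈ Ioi (0:ℝ), 0 ≤ Real.exp (-t) * ((1 - Real.exp (-(l * (1 - Real.exp (-t))))) / l) := by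
    intro t ht
    have h1 : Real.exp (-t) ≤ 1 := by
      rw [Real.exp_le_one_iff]; simp at ht ⊢; linarith
    have h2 : Real.exp (-(l * (1 - Real.exp (-t)))) ≤ 1 := by
      rw [Real.exp_le_one_iff]
      have : 0 ≤ l * (1 - Real.exp (-t)) := mul_nonneg hl.le (by linarith)
      linarith
    have := Real.exp_pos (-t)
    apply mul_nonneg (by positivity) (div_nonneg (by linarith) hl.le)
  have hlim : Tendsto (fun t : ℝ => (-Real.exp (-t) + Real.exp (-(l * (1 - Real.exp (-t)))) / l) / l)
      atTop (nhds ((0 + Real.exp (-l) / l) / l)) := by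
    have h0 : Tendsto (fun t : ℝ => Real.exp (-t)) atTop (nhds 0) := by
      simpa using Real.tendsto_exp_neg_atTop_nhds_zero
    have hi : Tendsto (fun t : ℝ => -(l * (1 - Real.exp (-t)))) atTop (nhds (-(l * (1 - 0)))) :=
      (((tendsto_const_nhds.sub h0).const_mul l).neg)
    have he2 : Tendsto (fun t : ℝ => Real.exp (-(l * (1 - Real.exp (-t))))) atTop
        (nhds (Real.exp (-(l * (1-0))))) := (Real.continuous_exp.tendsto _).comp hi
    have : Tendsto (fun t : ℝ => (-Real.exp (-t) + Real.exp (-(l * (1 - Real.exp (-t)))) / l) / l)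
        atTop (nhds ((-0 + Real.exp (-(l * (1-0))) / l) / l)) :=
      ((h0.neg.add (he2.div_const l)).div_const l)
    simpa using this
  constructor
  · rw [integral_Ioi_of_hasDerivAt_of_nonneg hcont hderiv hpos hlim]
    simp
    field_simp
    ring
  · exact integrableOn_Ioi_deriv_of_nonneg hcont hderiv hpos hlim

lemma int_G2 : (∫ t in Ioi (0:ℝ), Real.exp (-2*t)) = 1/2
    ∧ IntegrableOn (fun t : ℝ => Real.exp (-2*t)) (Ioi (0:ℝ)) volume := by
  have hcont : ContinuousWithinAt (fun t : ℝ => -Real.exp (-2*t)/2) (Ici (0:ℝ)) 0 := by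
    apply Continuous.continuousWithinAt; fun_prop
  have hderiv : ∀ t ∈ Ioi (0:ℝ), HasDerivAt (fun t : ℝ => -Real.exp (-2*t)/2) (Real.exp (-2*t)) t := by
    intro t _
    have h1 : HasDerivAt (fun t : ℝ => -2*t) (-2) t := by
      simpa using (hasDerivAt_id t).const_mul (-2)
    have := (h1.exp.neg).div_const 2
    refine this.congr_deriv ?_
    ring
  have hpos : ∀ t ∈ Ioi (0:ℝ), 0 ≤ Real.exp (-2*t) := fun t _ => (Real.exp_pos _).le
  have hlim : Tendsto (fun t : ℝ => -Real.exp (-2*t)/2) atTop (nhds 0) := by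
    have h0 : Tendsto (fun t : ℝ => Real.exp (-2*t)) atTop (nhds 0) := by
      apply Real.tendsto_exp_atBot.comp
      apply Tendsto.const_mul_atTop_of_neg (by norm_num : (-2:ℝ) < 0) tendsto_id
    simpa using (h0.neg.div_const 2)
  constructor
  · rw [integral_Ioi_of_hasDerivAt_of_nonneg hcont hderiv hpos hlim]
    norm_num
  · exact integrableOn_Ioi_deriv_of_nonneg hcont hderiv hpos hlim


lemma final_arith (l r : ℝ) (hl : 0 < l) (hr0 : 0 < r) (hr1 : r ≤ 1) :
    Real.exp (-l)/l^2 + 1/l - 1/l^2 + r/2 ≤ (1/l + r) * (1 - Real.exp (-l)) := by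
  have hEp : 0 < Real.exp (-l) := Real.exp_pos _
  have hcube : 1 + l + l^2/2 + l^3/6 ≤ Real.exp l := by
    have h := Real.sum_le_exp_of_nonneg hl.le 4
    have h4 : ∑ i ∈ Finset.range 4, l ^ i / (i.factorial : ℝ)
        = 1 + l + l^2/2 + l^3/6 := by
      rw [Finset.sum_range_succ, Finset.sum_range_succ, Finset.sum_range_succ,
        Finset.sum_range_one]
      norm_num [Nat.factorial]
    linarith [h4 ▸ h]
  have hmul : Real.exp (-l) * Real.exp l = 1 := by
    rw [← Real.exp_add]; simp
  have key1 : (1 + l) * Real.exp (-l) ≤ 1 := by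
    nlinarith [Real.add_one_le_exp l]
  have key2 : Real.exp (-l) * (1 + l + l^2) ≤ 1 + l^2/2 := by
    nlinarith [hEp, hcube, hmul, sq_nonneg l, pow_pos hl 3, pow_pos hl 4, pow_pos hl 5]
  set E := Real.exp (-l) with hEdef
  have h2 : (0:ℝ) < l^2 := by positivity
  have hclear : E + l - 1 + r*l^2/2 ≤ (l + r*l^2)*(1-E) := by
    rcases le_or_gt E (1/2) with hc | hc
    · nlinarith [mul_nonneg (mul_pos hr0 h2).le (by linarith : (0:ℝ) ≤ 1/2 - E)]
    · nlinarith [mul_nonneg (mul_nonneg (sub_nonneg.2 hr1) h2.le)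
        (by linarith : (0:ℝ) ≤ E - 1/2)]
  calc E/l^2 + 1/l - 1/l^2 + r/2 = (E + l - 1 + r*l^2/2)/l^2 := by field_simp
    _ ≤ ((l + r*l^2)*(1-E))/l^2 := by gcongr
    _ = (1/l + r) * (1 - E) := by field_simp

/-- **Expected inverse of a binomial–Poisson mixture along an immigration–death trajectory.**
For `λ > 0` and `k ∈ ℕ`, if for each `t ≥ 0` the random variable `Z_t = X_t + Y_t` is a sum
of independent `X_t ∼ Binomial(k, e^{−t})` and `Y_t ∼ Poisson(λ(1 − e^{−t}))`, then
`∫_0^∞ e^{−t} E[(Z_t + 1)^{−1}] dt ≤ (1/λ + 1/(k+1)) (1 − e^{−λ})`, where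
`E[(Z_t + 1)^{−1}]` is written out as the explicit binomial–Poisson convolution sum. -/
theorem immigration_death_inverse_moment_bound (l : ℝ) (hl : 0 < l) (k : ℕ) :
    (∫ t in Set.Ioi (0 : ℝ), Real.exp (-t) *
        ∑ j ∈ Finset.range (k + 1), ∑' m : ℕ,
          ((j : ℝ) + m + 1)⁻¹ * (Nat.choose k j : ℝ) * Real.exp (-t) ^ j *
            (1 - Real.exp (-t)) ^ (k - j) *
            (Real.exp (-(l * (1 - Real.exp (-t)))) * (l * (1 - Real.exp (-t))) ^ m /
              (Nat.factorial m : ℝ)))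
      ≤ (1 / l + 1 / (k + 1)) * (1 - Real.exp (-l)) := by
  set C : ℝ := ((k:ℝ)+2)⁻¹ + (((k:ℝ)+1)*((k:ℝ)+2))⁻¹ with hC
  have hCpos : 0 < C := by positivity
  have hCeq : C = ((k:ℝ)+1)⁻¹ := by
    rw [hC]
    have h1 : ((k:ℝ)+1) ≠ 0 := by positivity
    have h2 : ((k:ℝ)+2) ≠ 0 := by positivity
    field_simp
    ring
  set G : ℝ → ℝ := fun t => Real.exp (-t) * ((1 - Real.exp (-(l * (1 - Real.exp (-t))))) / l)
      + C * Real.exp (-2*t) with hG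
  have hIG1 := int_G1 l hl
  have hIG2 := int_G2
  have hGint : IntegrableOn G (Ioi (0:ℝ)) volume := hIG1.2.add (hIG2.2.const_mul C)
  have hnonneg : 0 ≤ᵐ[volume.restrict (Ioi (0:ℝ))] fun t => Real.exp (-t) *
        ∑ j ∈ Finset.range (k + 1), ∑' m : ℕ,
          ((j : ℝ) + m + 1)⁻¹ * (Nat.choose k j : ℝ) * Real.exp (-t) ^ j *
            (1 - Real.exp (-t)) ^ (k - j) *
            (Real.exp (-(l * (1 - Real.exp (-t)))) * (l * (1 - Real.exp (-t))) ^ m /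
              (Nat.factorial m : ℝ)) := by
    refine (ae_restrict_mem measurableSet_Ioi).mono fun t ht => ?_
    have ht0 : (0:ℝ) < t := ht
    have h1p : 0 ≤ 1 - Real.exp (-t) := by
      have : Real.exp (-t) ≤ 1 := by rw [Real.exp_le_one_iff]; linarith
      linarith
    apply mul_nonneg (Real.exp_pos _).le
    apply Finset.sum_nonneg
    intro j _
    apply tsum_nonneg
    intro m
    apply mul_nonneg
    apply mul_nonneg
    apply mul_nonneg
    apply mul_nonneg
    · positivity
    · positivity
    · positivity
    · exact pow_nonneg h1p _
    · apply div_nonneg _ (Nat.cast_nonneg _)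
      exact mul_nonneg (Real.exp_pos _).le (pow_nonneg (mul_nonneg hl.le h1p) _)
  have hle : (fun t => Real.exp (-t) *
        ∑ j ∈ Finset.range (k + 1), ∑' m : ℕ,
          ((j : ℝ) + m + 1)⁻¹ * (Nat.choose k j : ℝ) * Real.exp (-t) ^ j *
            (1 - Real.exp (-t)) ^ (k - j) *
            (Real.exp (-(l * (1 - Real.exp (-t)))) * (l * (1 - Real.exp (-t))) ^ m /
              (Nat.factorial m : ℝ)))
      ≤ᵐ[volume.restrict (Ioi (0:ℝ))] G := by
    refine (ae_restrict_mem measurableSet_Ioi).mono fun t ht => ?_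
    have ht0 : (0:ℝ) < t := ht
    have hp : 0 < Real.exp (-t) := Real.exp_pos _
    have hp1 : Real.exp (-t) < 1 := by
      rw [Real.exp_lt_one_iff]; linarith
    have hμ : 0 < l * (1 - Real.exp (-t)) := mul_pos hl (by linarith)
    have hIB := inner_bound k (Real.exp (-t)) (l * (1 - Real.exp (-t))) hp hp1 hμ
    set p := Real.exp (-t)
    set μ := l * (1 - p) with hμdef
    set h : ℝ := (1 - Real.exp (-μ)) / μ with hhdef
    have hhle1 : h ≤ 1 := by
      rw [hhdef, div_le_one hμ]
      have := Real.add_one_le_exp (-μ)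
      linarith
    have hh0 : 0 ≤ h := by
      rw [hhdef]
      apply div_nonneg _ hμ.le
      have : Real.exp (-μ) ≤ 1 := by rw [Real.exp_le_one_iff]; linarith
      linarith
    have heq : (1-p) * h = (1 - Real.exp (-μ)) / l := by
      rw [hhdef, hμdef]
      have h1p : (1:ℝ) - p ≠ 0 := by linarith
      field_simp
    calc p * ∑ j ∈ Finset.range (k + 1), ∑' m : ℕ,
          ((j : ℝ) + m + 1)⁻¹ * (Nat.choose k j : ℝ) * p ^ j *
            (1 - p) ^ (k - j) * (Real.exp (-μ) * μ ^ m / (Nat.factorial m : ℝ))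
        ≤ p * ((1-p) * h + p * ((k:ℝ)+2)⁻¹ + p * (((k:ℝ)+1)*((k:ℝ)+2))⁻¹ * h) :=
          mul_le_mul_of_nonneg_left hIB hp.le
      _ ≤ G t := by
          rw [hG]
          simp only
          rw [heq, show Real.exp (-2*t) = p * p by
            rw [show (-2:ℝ)*t = -t + -t by ring, Real.exp_add]]
          have hb : p * (((k:ℝ)+1)*((k:ℝ)+2))⁻¹ * h ≤ p * (((k:ℝ)+1)*((k:ℝ)+2))⁻¹ := by
            apply mul_le_of_le_one_right (by positivity) hhle1
          have : p * ((k:ℝ)+2)⁻¹ + p * (((k:ℝ)+1)*((k:ℝ)+2))⁻¹ * h ≤ p * C := by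
            rw [hC]; nlinarith
          nlinarith [mul_le_mul_of_nonneg_left this hp.le]
  calc (∫ t in Set.Ioi (0 : ℝ), Real.exp (-t) *
        ∑ j ∈ Finset.range (k + 1), ∑' m : ℕ,
          ((j : ℝ) + m + 1)⁻¹ * (Nat.choose k j : ℝ) * Real.exp (-t) ^ j *
            (1 - Real.exp (-t)) ^ (k - j) *
            (Real.exp (-(l * (1 - Real.exp (-t)))) * (l * (1 - Real.exp (-t))) ^ m /
              (Nat.factorial m : ℝ)))
      ≤ ∫ t in Set.Ioi (0:ℝ), G t := integral_mono_of_nonneg hnonneg hGint hle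
    _ = (Real.exp (-l)/l^2 + 1/l - 1/l^2) + C * (1/2) := by
        rw [hG, integral_add hIG1.2 (hIG2.2.const_mul C), hIG1.1, integral_const_mul, hIG2.1]
    _ ≤ (1 / l + 1 / (k + 1)) * (1 - Real.exp (-l)) := by
        rw [hCeq]
        have hr0 : (0:ℝ) < ((k:ℝ)+1)⁻¹ := by positivity
        have hr1 : ((k:ℝ)+1)⁻¹ ≤ 1 := by
          rw [inv_le_one_iff₀]; right; linarith [Nat.cast_nonneg (α := ℝ) k]
        have := final_arith l ((k:ℝ)+1)⁻¹ hl hr0 hr1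
        rw [show (1:ℝ)/((k:ℝ)+1) = ((k:ℝ)+1)⁻¹ by rw [one_div]]
        linarith
end

section
/- (Approximation of geometric maxima by a discretized Gumbel distribution) For each integer n ≥ 1, let X_1, …, X_n be i.i.d. geometric random variables with success probability p ∈ (0,1) and failure probability q = 1 − p. Then for every integer k ≥ 0, writing k* = k·log(1/q) − log n (so that e^{−k*} = n q^k), one has | P( X_(n) < k ) − exp(−n q^k) | = | P( X_(n) < (log n + k*)/log(1/q) ) − exp(−e^{−k*}) | ≤ (log n)/(q n) + 1/n. -/
open MeasureTheory ProbabilityTheory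

lemma aux_pow_sub_pow {a b : ℝ} (hb : 0 ≤ b) (hab : b ≤ a) (n : ℕ) :
    a ^ (n + 1) - b ^ (n + 1) ≤ (n + 1) * (a - b) * a ^ n := by
  induction n with
  | zero => simp
  | succ m ih =>
    have ha : 0 ≤ a := hb.trans hab
    have h1 : b ^ (m + 1) ≤ a ^ (m + 1) := pow_le_pow_left₀ hb hab _
    have h2 : a * (a ^ (m + 1) - b ^ (m + 1)) ≤ a * ((m + 1) * (a - b) * a ^ m) :=
      mul_le_mul_of_nonneg_left ih ha
    have h3 : (a - b) * b ^ (m + 1) ≤ (a - b) * a ^ (m + 1) :=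
      mul_le_mul_of_nonneg_left h1 (by linarith)
    push_cast
    calc a ^ (m + 2) - b ^ (m + 2)
        = a * (a ^ (m + 1) - b ^ (m + 1)) + (a - b) * b ^ (m + 1) := by ring
      _ ≤ a * ((↑m + 1) * (a - b) * a ^ m) + (a - b) * a ^ (m + 1) := by push_cast at h2; linarith
      _ = (↑m + 1 + 1) * (a - b) * a ^ (m + 1) := by rw [pow_succ]; ring

lemma aux_t_exp (t : ℝ) (ht : 0 ≤ t) : t * Real.exp (-t) ≤ 1 / 2 := by
  have h : (1 + t / 2) ^ 2 ≤ Real.exp t := by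
    have h0 := Real.add_one_le_exp (t / 2)
    calc (1 + t / 2) ^ 2 ≤ Real.exp (t / 2) ^ 2 := by nlinarith [Real.exp_pos (t/2)]
    _ = Real.exp t := by rw [← Real.exp_nat_mul]; congr 1; push_cast; ring
  have hpos : (0 : ℝ) < Real.exp t := Real.exp_pos t
  rw [Real.exp_neg, inv_eq_one_div, mul_one_div, div_le_div_iff₀ hpos (by norm_num : (0:ℝ) < 2)]
  nlinarith [sq_nonneg (t / 2 - 1)]

-- e^{-x} - (1-x) ≤ x^2 for 0 ≤ x
lemma aux_exp_lin (x : ℝ) (hx : 0 ≤ x) : Real.exp (-x) - (1 - x) ≤ x ^ 2 := by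
  have h : Real.exp (-x) ≤ 1 / (1 + x) := by
    rw [Real.exp_neg, inv_eq_one_div, div_le_div_iff₀ (Real.exp_pos x) (by linarith)]
    nlinarith [Real.add_one_le_exp x]
  have : 1 / (1 + x) - (1 - x) = x ^ 2 / (1 + x) := by field_simp; ring
  have h2 : x ^ 2 / (1 + x) ≤ x ^ 2 := by
    apply div_le_self (sq_nonneg x); linarith
  linarith

lemma aux_analytic (n : ℕ) (hn : 1 ≤ n) (x : ℝ) (hx : 0 ≤ x) (hx1 : x ≤ 1) :
    |(1 - x) ^ n - Real.exp (-(n * x))| ≤ Real.log n / n + 1 / n := by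
  have h1x : (0:ℝ) ≤ 1 - x := by linarith
  have hle : (1 - x) ^ n ≤ Real.exp (-(n * x)) := by
    calc (1 - x) ^ n ≤ Real.exp (-x) ^ n := by
          apply pow_le_pow_left₀ h1x
          linarith [Real.add_one_le_exp (-x)]
      _ = Real.exp (-(n * x)) := by rw [← Real.exp_nat_mul]; ring_nf
  rw [abs_sub_comm, abs_of_nonneg (by linarith)]
  have hexp_le_one : Real.exp (-(n * x)) ≤ 1 := by
    exact Real.exp_le_one_iff.mpr (neg_nonpos.mpr (by positivity))
  have hpowpos : (0:ℝ) ≤ (1 - x) ^ n := pow_nonneg h1x n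
  rcases eq_or_lt_of_le hn with h1 | h2
  · -- n = 1
    simp only [← h1]
    push_cast
    simp only [Nat.cast_one, Real.log_one]
    norm_num
    nlinarith [Real.exp_pos (-x), hexp_le_one, aux_exp_lin x hx]
  · -- n ≥ 2
    have hn2 : (2:ℕ) ≤ n := h2
    have hnR : (2:ℝ) ≤ (n:ℝ) := by exact_mod_cast hn2
    have hlogn : 0 < Real.log n := Real.log_pos (by linarith)
    rcases le_or_gt (Real.log n / n) x with hcase | hcase
    · -- x ≥ log n / n : exp(-nx) ≤ 1/n
      have : Real.exp (-(n * x)) ≤ 1 / n := by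
        rw [show (1:ℝ)/n = Real.exp (-(Real.log n)) by
          rw [Real.exp_neg, Real.exp_log (by linarith)]; ring]
        apply Real.exp_le_exp.mpr
        have : Real.log n ≤ n * x := by
          rw [div_le_iff₀ (by linarith : (0:ℝ) < (n:ℝ))] at hcase; linarith [hcase]
        linarith
      have : Real.exp (-(n * x)) - (1 - x) ^ n ≤ 1 / n := by linarith
      have hrhs : (0:ℝ) ≤ Real.log n / n := by positivity
      linarith
    · -- x < log n / n : diff ≤ x
      have key : Real.exp (-(n * x)) - (1 - x) ^ n ≤ x := by
        obtain ⟨m, rfl⟩ : ∃ m, n = m + 1 := ⟨n - 1, (Nat.succ_pred_eq_of_pos (by omega)).symm⟩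
        have hsub := aux_pow_sub_pow h1x (by linarith [Real.add_one_le_exp (-x)] : 1 - x ≤ Real.exp (-x)) m
        have hexpm : Real.exp (-x) ^ (m + 1) = Real.exp (-((m+1 : ℕ) * x)) := by
          rw [← Real.exp_nat_mul]; ring_nf
        have hexpmm : Real.exp (-x) ^ m = Real.exp (-(m * x)) := by
          rw [← Real.exp_nat_mul]; ring_nf
        rw [hexpm, hexpmm] at hsub
        have hlin := aux_exp_lin x hx
        have hte : (m * x) * Real.exp (-(m * x)) ≤ 1 / 2 := aux_t_exp _ (by positivity)
        have hm1 : (1:ℝ) ≤ m := by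
          have : 2 ≤ m + 1 := hn2
          have : 1 ≤ m := by omega
          exact_mod_cast this
        -- (m+1) * x^2 * exp(-(m x)) ≤ x * ((m+1)/m) * (m x exp(-(m x))) ≤ x * 2 * 1/2 = x
        have hfac : ((m:ℝ) + 1) * x * Real.exp (-(m * x)) ≤ 1 := by
          have hmpos : (0:ℝ) < m := by linarith
          have h2m : (m:ℝ) + 1 ≤ 2 * m := by linarith
          have hexpnn : (0:ℝ) ≤ Real.exp (-(m * x)) := (Real.exp_pos _).le
          calc ((m:ℝ) + 1) * x * Real.exp (-(m * x)) ≤ 2 * m * x * Real.exp (-(m * x)) := by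
                apply mul_le_mul_of_nonneg_right _ hexpnn
                apply mul_le_mul_of_nonneg_right h2m hx
            _ = 2 * ((m * x) * Real.exp (-(m * x))) := by ring
            _ ≤ 2 * (1 / 2) := by linarith [hte]
            _ = 1 := by norm_num
        have hdiff : Real.exp (-x) - (1 - x) ≤ x ^ 2 := hlin
        have hexpnn : (0:ℝ) ≤ Real.exp (-(m * x)) := (Real.exp_pos _).le
        calc Real.exp (-((m+1:ℕ) * x)) - (1 - x) ^ (m + 1)
            ≤ ((m:ℝ) + 1) * (Real.exp (-x) - (1 - x)) * Real.exp (-(m * x)) := by push_cast at hsub ⊢; linarith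
          _ ≤ ((m:ℝ) + 1) * x ^ 2 * Real.exp (-(m * x)) := by
              apply mul_le_mul_of_nonneg_right _ hexpnn
              apply mul_le_mul_of_nonneg_left hdiff (by positivity)
          _ = (((m:ℝ) + 1) * x * Real.exp (-(m * x))) * x := by ring
          _ ≤ 1 * x := mul_le_mul_of_nonneg_right hfac hx
          _ = x := by ring
      have : x ≤ Real.log n / n := hcase.le
      have hinv : (0:ℝ) ≤ 1 / n := by positivity
      linarith

/-- **Approximation of geometric maxima by a discretized Gumbel distribution.** Let
`X₁, …, Xₙ` be i.i.d. geometric random variables with success probability `p ∈ (0,1)` and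
failure probability `q = 1 − p`.  Then for every integer `k ≥ 0`, writing
`k* = k log(1/q) − log n` (so that `e^{−k*} = n q^k`),
`|P(X₍ₙ₎ < k) − exp(−n q^k)| = |P(X₍ₙ₎ < (log n + k*)/log(1/q)) − exp(−e^{−k*})|
  ≤ (log n)/(qn) + 1/n`. -/
theorem geometric_max_discretized_gumbel {Ω : Type*} [MeasurableSpace Ω] (P : Measure Ω)
    [IsProbabilityMeasure P] (n : ℕ) (hn : 1 ≤ n) (p q : ℝ) (hp : 0 < p) (hp1 : p < 1)
    (hq : q = 1 - p) (X : Fin n → Ω → ℕ)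
    (hmeas : ∀ i, Measurable (X i))
    (hgeo : ∀ i k, P {ω | X i ω = k} = ENNReal.ofReal (p * q ^ k))
    (hindep : iIndepFun X P) :
    ∀ (k : ℕ) (kstar : ℝ), kstar = k * Real.log (1 / q) - Real.log n →
      |(P {ω | ∀ i, X i ω < k}).toReal - Real.exp (-(n * q ^ k))| =
        |(P {ω | ∀ i, (X i ω : ℝ) < (Real.log n + kstar) / Real.log (1 / q)}).toReal -
          Real.exp (-Real.exp (-kstar))| ∧
      |(P {ω | ∀ i, X i ω < k}).toReal - Real.exp (-(n * q ^ k))| ≤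
        Real.log n / (q * n) + 1 / n := by
  intro k kstar hkstar
  have hq0 : 0 < q := by rw [hq]; linarith
  have hq1 : q < 1 := by rw [hq]; linarith
  have hqk1 : q ^ k ≤ 1 := pow_le_one₀ hq0.le hq1.le
  have hqk0 : 0 ≤ q ^ k := pow_nonneg hq0.le k
  have hn0 : (0:ℝ) < n := by exact_mod_cast hn
  -- log (1/q) > 0
  have hL : 0 < Real.log (1 / q) := Real.log_pos (one_lt_one_div hq0 hq1)
  -- single probability
  have hsingle : ∀ i, P {ω | X i ω < k} = ENNReal.ofReal (1 - q ^ k) := by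
    intro i
    have hset : {ω | X i ω < k} = ⋃ j ∈ Finset.range k, {ω | X i ω = j} := by
      ext ω; simp
    have hdisj : (Finset.range k : Set ℕ).PairwiseDisjoint
        (fun j => {ω | X i ω = j}) := by
      intro a _ b _ hab
      simp only [Function.onFun, Set.disjoint_left]
      intro ω ha hb
      exact hab (ha.symm.trans hb)
    have hms : ∀ j ∈ Finset.range k, MeasurableSet {ω | X i ω = j} := by
      intro j _
      exact (hmeas i) (measurableSet_singleton j)
    rw [hset, measure_biUnion_finset hdisj hms]
    have : ∀ j ∈ Finset.range k, P {ω | X i ω = j} = ENNReal.ofReal (p * q ^ j) :=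
      fun j _ => hgeo i j
    rw [Finset.sum_congr rfl this, ← ENNReal.ofReal_sum_of_nonneg
      (fun j _ => by positivity)]
    congr 1
    rw [← Finset.mul_sum, geom_sum_eq hq1.ne]
    have hq1' : q - 1 ≠ 0 := by linarith
    rw [hq]
    have hrw : ((1:ℝ) - p) - 1 = -p := by ring
    rw [hrw, div_neg, mul_neg, mul_div_assoc', mul_div_cancel_left₀ _ hp.ne']
    ring
  -- independence gives the product
  have hprod : P {ω | ∀ i, X i ω < k} = ENNReal.ofReal ((1 - q ^ k) ^ n) := by
    have hset : {ω | ∀ i, X i ω < k} = ⋂ i, {ω | X i ω < k} := by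
      ext ω; simp
    rw [hset, hindep.meas_iInter (s := fun i => {ω | X i ω < k})
      (fun i => ⟨{m | m < k}, MeasurableSpace.measurableSet_top, rfl⟩)]
    simp only [hsingle]
    rw [Finset.prod_const, Finset.card_univ, Fintype.card_fin,
      ← ENNReal.ofReal_pow (by linarith)]
  have htoReal : (P {ω | ∀ i, X i ω < k}).toReal = (1 - q ^ k) ^ n := by
    rw [hprod, ENNReal.toReal_ofReal (pow_nonneg (by linarith) n)]
  -- first equality
  have hdeq : (Real.log n + kstar) / Real.log (1 / q) = (k : ℝ) := by
    rw [hkstar]; field_simp; ring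
  have hseteq : {ω | ∀ i, (X i ω : ℝ) < (Real.log n + kstar) / Real.log (1 / q)}
      = {ω | ∀ i, X i ω < k} := by
    ext ω; simp only [Set.mem_setOf_eq, hdeq, Nat.cast_lt]
  have hexpeq : Real.exp (-kstar) = n * q ^ k := by
    rw [hkstar, show -((k:ℝ) * Real.log (1 / q) - Real.log n)
      = Real.log n + (k:ℝ) * Real.log q by rw [one_div, Real.log_inv]; ring,
      Real.exp_add, Real.exp_log hn0, Real.exp_nat_mul, Real.exp_log hq0]
  constructor
  · rw [hseteq, hexpeq]
  · rw [htoReal]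
    have hmain := aux_analytic n hn (q ^ k) hqk0 hqk1
    have hlogn : 0 ≤ Real.log n := Real.log_natCast_nonneg n
    have hstep : Real.log n / n ≤ Real.log n / (q * n) := by
      apply div_le_div_of_nonneg_left hlogn (by positivity) ?_
      nlinarith
    calc |(1 - q ^ k) ^ n - Real.exp (-(n * q ^ k))| ≤ Real.log n / n + 1 / n := hmain
      _ ≤ Real.log n / (q * n) + 1 / n := by linarith
end
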